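/- Quantitative isolation of a zero of a quadratic map: let n ≥ 1, let A : ℝⁿ × ℝⁿ → ℝⁿ be a symmetric bilinear map, L : ℝⁿ → ℝⁿ linear, c ∈ ℝⁿ, and define F(x) = A(x, x) + L(x) + c. Suppose F(X₀) = 0 for some X₀ ∈ ℝⁿ, and there is h > 0 such that ‖L(v) + 2·A(X₀, v)‖∞ ≥ h·‖v‖∞ for all v ∈ ℝⁿ, and ‖A(v, v)‖∞ ≤ 4·‖v‖∞² for all v ∈ ℝⁿ. Then for every X ∈ ℝⁿ with 0 < ‖X − X₀‖∞ < h/4 one has F(X) ≠ 0; that is, X₀ is the unique zero of F in the open ‖·‖∞-ball of radius h/4 around X₀. -/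

import Mathlib

/-- Quantitative isolation of a zero of a quadratic map on `ℝⁿ` (with the
sup norm, which is the norm of `Fin n → ℝ`): if `F(x) = A(x,x) + L(x) + c` with
`A` symmetric bilinear, `F(X₀) = 0`, the differential at `X₀` satisfies
`‖L v + 2 A(X₀, v)‖∞ ≥ h ‖v‖∞` and `‖A(v,v)‖∞ ≤ 4 ‖v‖∞²`, then `X₀` is the only
zero of `F` in the open sup-norm ball of radius `h / 4` around `X₀`. -/
theorem quadratic_zero_isolation (n : ℕ) (hn : 1 ≤ n)
    (A : (Fin n → ℝ) →ₗ[ℝ] (Fin n → ℝ) →ₗ[ℝ] (Fin n → ℝ))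
    (hA : ∀ x y : Fin n → ℝ, A x y = A y x)
    (L : (Fin n → ℝ) →ₗ[ℝ] (Fin n → ℝ)) (c : Fin n → ℝ)
    (F : (Fin n → ℝ) → (Fin n → ℝ))
    (hF : ∀ x : Fin n → ℝ, F x = A x x + L x + c)
    (X₀ : Fin n → ℝ) (hX₀ : F X₀ = 0)
    (h : ℝ) (hh : 0 < h)
    (hlow : ∀ v : Fin n → ℝ, h * ‖v‖ ≤ ‖L v + (2 : ℝ) • A X₀ v‖)
    (hup : ∀ v : Fin n → ℝ, ‖A v v‖ ≤ 4 * ‖v‖ ^ 2) :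
    ∀ X : Fin n → ℝ, 0 < ‖X - X₀‖ → ‖X - X₀‖ < h / 4 → F X ≠ 0 := by
  intro X hpos hlt hFX
  set w := X - X₀ with hw
  have hXw : X = X₀ + w := by rw [hw]; abel
  have key : L w + (2:ℝ) • A X₀ w = - A w w := by
    have h0 : F X₀ = A X₀ X₀ + L X₀ + c := hF X₀
    have h1 : F X = A X X + L X + c := hF X
    rw [hXw] at h1
    simp only [map_add, LinearMap.add_apply] at h1
    have h2 : (0 : Fin n → ℝ) = (A X₀ X₀ + L X₀ + c) + (L w + (2:ℝ) • A X₀ w + A w w) := by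
      rw [← hFX, hXw, h1, hA w X₀]
      module
    rw [← h0, hX₀] at h2
    have h3 : L w + (2:ℝ) • A X₀ w + A w w = 0 := by
      have := h2.symm
      linear_combination (norm := module) this
    linear_combination (norm := module) h3
  have hle : h * ‖w‖ ≤ 4 * ‖w‖ ^ 2 := by
    calc h * ‖w‖ ≤ ‖L w + (2:ℝ) • A X₀ w‖ := hlow w
    _ = ‖A w w‖ := by rw [key, norm_neg]
    _ ≤ 4 * ‖w‖ ^ 2 := hup w
  have : h ≤ 4 * ‖w‖ := by
    have := (mul_le_mul_iff_of_pos_right hpos).mp (by nlinarith : h * ‖w‖ ≤ (4 * ‖w‖) * ‖w‖)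
    exact this
  linarith
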